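/- Let t > 0 and let α, β be real numbers with 0 ≤ β < α. Then (4πt)^{-1}·∫_ℝ∫_ℝ exp(−2α|x| − (x−y)²/(2t) + 2β|y|) dx dy ≤ (2πt)^{-1/2}·(α−β)^{-1}·exp(2β²t); equivalently, the squared L²(ℝ×ℝ)-norm of the weighted kernel (x,y) ↦ e^{−α|x|} k_t(x,y) e^{β|y|} is at most (2πt)^{-1/2}(α−β)^{-1}e^{2β²t}. -/

import Mathlib

open MeasureTheory Real

lemma gauss_sq (t c : ℝ) (ht : 0 < t) (u : ℝ) :
    -(u^2)/(2*t) + c*u = c^2*t/2 + (-(2*t)⁻¹ * (u - c*t)^2) := by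
  field_simp
  ring

lemma gauss_integrable (t c : ℝ) (ht : 0 < t) :
    Integrable (fun u : ℝ => Real.exp (-(u^2)/(2*t) + c*u)) := by
  simp_rw [gauss_sq t c ht, Real.exp_add]
  exact ((integrable_exp_neg_mul_sq (by positivity : (0:ℝ) < (2*t)⁻¹)).comp_sub_right
    (c*t)).const_mul _

lemma gauss_integral (t c : ℝ) (ht : 0 < t) :
    ∫ u : ℝ, Real.exp (-(u^2)/(2*t) + c*u)
      = Real.sqrt (2*Real.pi*t) * Real.exp (c^2*t/2) := by
  simp_rw [gauss_sq t c ht, Real.exp_add, integral_const_mul]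
  rw [show (fun u : ℝ => Real.exp (-(2*t)⁻¹ * (u - c*t)^2))
      = (fun u : ℝ => (fun v : ℝ => Real.exp (-(2*t)⁻¹ * v^2)) (u - c*t)) from rfl,
    integral_sub_right_eq_self (fun v : ℝ => Real.exp (-(2*t)⁻¹ * v^2)) (c*t),
    integral_gaussian]
  rw [mul_comm]
  congr 2
  rw [div_eq_mul_inv, inv_inv]
  ring

lemma pointwise_bd (t a b x y : ℝ) (hb : 0 ≤ b) :
    Real.exp (-2 * a * |x| - (x - y) ^ 2 / (2 * t) + 2 * b * |y|)
      ≤ Real.exp (-(2*(a-b))*|x|) *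
        (Real.exp (-((y-x)^2)/(2*t) + (2*b)*(y-x))
          + Real.exp (-((y-x)^2)/(2*t) + (-(2*b))*(y-x))) := by
  have h1 : |y| ≤ |x| + |y - x| := by
    have := abs_add_le x (y - x); simpa using this
  have h2 : 2*b*|y| ≤ 2*b*|x| + 2*b*|y-x| := by
    nlinarith [mul_le_mul_of_nonneg_left h1 (by linarith : (0:ℝ) ≤ 2*b)]
  have e1 : (x-y)^2/(2*t) = (y-x)^2/(2*t) := by ring_nf
  have key : -2 * a * |x| - (x - y) ^ 2 / (2 * t) + 2 * b * |y|
      ≤ (-(2*(a-b))*|x|) + (-((y-x)^2)/(2*t) + 2*b*|y-x|) := by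
    rw [e1]; simp only [neg_div]; linarith
  have h3 : Real.exp (2*b*|y-x|)
      ≤ Real.exp ((2*b)*(y-x)) + Real.exp ((-(2*b))*(y-x)) := by
    rcases abs_cases (y-x) with ⟨h,_⟩|⟨h,_⟩
    · rw [h]; exact le_add_of_nonneg_right (Real.exp_pos _).le
    · rw [h, show 2*b*-(y-x) = (-(2*b))*(y-x) by ring]
      exact le_add_of_nonneg_left (Real.exp_pos _).le
  calc Real.exp (-2 * a * |x| - (x - y) ^ 2 / (2 * t) + 2 * b * |y|)
      ≤ Real.exp ((-(2*(a-b))*|x|) + (-((y-x)^2)/(2*t) + 2*b*|y-x|)) :=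
        Real.exp_le_exp.mpr key
    _ = Real.exp (-(2*(a-b))*|x|) * (Real.exp (-((y-x)^2)/(2*t)) * Real.exp (2*b*|y-x|)) := by
        rw [Real.exp_add, Real.exp_add]
    _ ≤ Real.exp (-(2*(a-b))*|x|) * (Real.exp (-((y-x)^2)/(2*t))
          * (Real.exp ((2*b)*(y-x)) + Real.exp ((-(2*b))*(y-x)))) := by
        have := mul_le_mul_of_nonneg_left h3 (Real.exp_pos (-((y-x)^2)/(2*t))).le
        exact mul_le_mul_of_nonneg_left this (Real.exp_pos _).le
    _ = _ := by rw [mul_add, ← Real.exp_add, ← Real.exp_add]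

lemma inner_bound (t a b : ℝ) (ht : 0 < t) (hb : 0 ≤ b) (x : ℝ) :
    ∫ y : ℝ, Real.exp (-2 * a * |x| - (x - y) ^ 2 / (2 * t) + 2 * b * |y|)
      ≤ Real.exp (-(2*(a-b))*|x|) * (2 * Real.sqrt (2*Real.pi*t) * Real.exp (2*b^2*t)) := by
  have hint1 : Integrable (fun y : ℝ =>
      Real.exp (-((y-x)^2)/(2*t) + (2*b)*(y-x))) :=
    (gauss_integrable t (2*b) ht).comp_sub_right x
  have hint2 : Integrable (fun y : ℝ =>
      Real.exp (-((y-x)^2)/(2*t) + (-(2*b))*(y-x))) :=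
    (gauss_integrable t (-(2*b)) ht).comp_sub_right x
  have hg : Integrable (fun y : ℝ => Real.exp (-(2*(a-b))*|x|) *
      (Real.exp (-((y-x)^2)/(2*t) + (2*b)*(y-x))
        + Real.exp (-((y-x)^2)/(2*t) + (-(2*b))*(y-x)))) :=
    (hint1.add hint2).const_mul _
  calc ∫ y : ℝ, Real.exp (-2 * a * |x| - (x - y) ^ 2 / (2 * t) + 2 * b * |y|)
      ≤ ∫ y : ℝ, Real.exp (-(2*(a-b))*|x|) *
        (Real.exp (-((y-x)^2)/(2*t) + (2*b)*(y-x))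
          + Real.exp (-((y-x)^2)/(2*t) + (-(2*b))*(y-x))) := by
        refine integral_mono_of_nonneg (Filter.Eventually.of_forall fun y => (Real.exp_pos _).le)
          hg (Filter.Eventually.of_forall fun y => pointwise_bd t a b x y hb)
    _ = Real.exp (-(2*(a-b))*|x|) * (2 * Real.sqrt (2*Real.pi*t) * Real.exp (2*b^2*t)) := by
        rw [integral_const_mul, integral_add hint1 hint2]
        rw [show (fun y : ℝ => Real.exp (-((y-x)^2)/(2*t) + (2*b)*(y-x)))
            = (fun y : ℝ => (fun u : ℝ => Real.exp (-(u^2)/(2*t) + (2*b)*u)) (y - x)) from rfl,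
          show (fun y : ℝ => Real.exp (-((y-x)^2)/(2*t) + (-(2*b))*(y-x)))
            = (fun y : ℝ => (fun u : ℝ => Real.exp (-(u^2)/(2*t) + (-(2*b))*u)) (y - x)) from rfl,
          integral_sub_right_eq_self (fun u : ℝ => Real.exp (-(u^2)/(2*t) + (2*b)*u)) x,
          integral_sub_right_eq_self (fun u : ℝ => Real.exp (-(u^2)/(2*t) + (-(2*b))*u)) x,
          gauss_integral t (2*b) ht, gauss_integral t (-(2*b)) ht]
        rw [show (2*b)^2*t/2 = 2*b^2*t by ring, show (-(2*b))^2*t/2 = 2*b^2*t by ring]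
        ring

lemma exp_abs_integrable (c : ℝ) (hc : 0 < c) :
    Integrable (fun x : ℝ => Real.exp (-c * |x|)) := by
  have h1 : IntegrableOn (fun x : ℝ => Real.exp (-c * |x|)) (Set.Ioi 0) := by
    refine (exp_neg_integrableOn_Ioi 0 hc).congr_fun ?_ measurableSet_Ioi
    intro x hx
    show Real.exp (-c * x) = Real.exp (-c * |x|)
    rw [abs_of_pos (Set.mem_Ioi.mp hx)]
  have h2 : IntegrableOn (fun x : ℝ => Real.exp (-c * |x|)) (Set.Iic 0) := by
    unfold IntegrableOn
    rw [← Measure.map_neg_eq_self (volume : Measure ℝ)]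
    have m : MeasurableEmbedding fun x : ℝ => -x :=
      (Homeomorph.neg ℝ).measurableEmbedding
    show IntegrableOn (fun x : ℝ => Real.exp (-c * |x|)) (Set.Iic 0)
      (Measure.map (fun x : ℝ => -x) volume)
    rw [m.integrableOn_map_iff]
    simp_rw [Function.comp_def, abs_neg, Set.neg_preimage, Set.neg_Iic, neg_zero]
    exact (integrableOn_Ici_iff_integrableOn_Ioi).mpr h1
  have h3 := h2.union h1
  rw [Set.Iic_union_Ioi] at h3
  exact integrableOn_univ.mp h3

lemma exp_abs_integral (c : ℝ) (hc : 0 < c) :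
    ∫ x : ℝ, Real.exp (-c * |x|) = 2 / c := by
  rw [integral_comp_abs (f := fun u : ℝ => Real.exp (-c * u))]
  have : ∀ x : ℝ, Real.exp (-c * x) = (fun v : ℝ => Real.exp (-v)) (c * x) := by
    intro x; simp [neg_mul]
  simp_rw [this]
  rw [integral_comp_mul_left_Ioi (fun v : ℝ => Real.exp (-v)) 0 hc, mul_zero,
    integral_exp_neg_Ioi]
  simp [smul_eq_mul]
  ring

/-- Hilbert–Schmidt (squared `L²`) bound for the weighted heat kernel
`(x,y) ↦ e^{−α|x|} k_t(x,y) e^{β|y|}` on the real line, `0 ≤ β < α`, `t > 0`. -/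
theorem stmt4 (t a b : ℝ) (ht : 0 < t) (hb : 0 ≤ b) (hba : b < a) :
    (4 * Real.pi * t)⁻¹ *
        ∫ x : ℝ, ∫ y : ℝ, Real.exp (-2 * a * |x| - (x - y) ^ 2 / (2 * t) + 2 * b * |y|)
      ≤ (Real.sqrt (2 * Real.pi * t))⁻¹ * (a - b)⁻¹ * Real.exp (2 * b ^ 2 * t) := by
  have hab : 0 < a - b := sub_pos.mpr hba
  set K : ℝ := 2 * Real.sqrt (2*Real.pi*t) * Real.exp (2*b^2*t) with hK
  have hK0 : 0 ≤ K := by positivity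
  have houter : ∫ x : ℝ, ∫ y : ℝ, Real.exp (-2 * a * |x| - (x - y) ^ 2 / (2 * t) + 2 * b * |y|)
      ≤ (2 / (2*(a-b))) * K := by
    have hint : Integrable (fun x : ℝ => Real.exp (-(2*(a-b))*|x|) * K) :=
      (exp_abs_integrable (2*(a-b)) (by linarith)).mul_const K
    calc ∫ x : ℝ, ∫ y : ℝ, Real.exp (-2 * a * |x| - (x - y) ^ 2 / (2 * t) + 2 * b * |y|)
        ≤ ∫ x : ℝ, Real.exp (-(2*(a-b))*|x|) * K := by
          refine integral_mono_of_nonneg (Filter.Eventually.of_forall fun x =>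
            integral_nonneg fun y => (Real.exp_pos _).le) hint
            (Filter.Eventually.of_forall fun x => inner_bound t a b ht hb x)
      _ = (2 / (2*(a-b))) * K := by
          rw [integral_mul_const, exp_abs_integral (2*(a-b)) (by linarith)]
  have hpi : 0 < Real.pi := Real.pi_pos
  have hco : (0:ℝ) ≤ (4 * Real.pi * t)⁻¹ := by positivity
  calc (4 * Real.pi * t)⁻¹ *
        ∫ x : ℝ, ∫ y : ℝ, Real.exp (-2 * a * |x| - (x - y) ^ 2 / (2 * t) + 2 * b * |y|)
      ≤ (4 * Real.pi * t)⁻¹ * ((2 / (2*(a-b))) * K) :=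
        mul_le_mul_of_nonneg_left houter hco
    _ = (Real.sqrt (2 * Real.pi * t))⁻¹ * (a - b)⁻¹ * Real.exp (2 * b ^ 2 * t) := by
        have hs : Real.sqrt (2*Real.pi*t) ^ 2 = 2*Real.pi*t :=
          Real.sq_sqrt (by positivity)
        have hs0 : 0 < Real.sqrt (2*Real.pi*t) := Real.sqrt_pos.mpr (by positivity)
        set s := Real.sqrt (2*Real.pi*t) with hsdef
        have h4 : (4*Real.pi*t) = 2*s^2 := by rw [hs]; ring
        have hane : a - b ≠ 0 := ne_of_gt hab
        rw [hK, show (4*Real.pi*t : ℝ) = 2*s^2 from h4]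
        field_simp
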